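/- arXiv:1502.02290 — 2 statements merged into one kernel-verified Lean document; each statement's English description precedes it below -/
import Mathlib

section
/- Let S be a finite set, μ a probability distribution on S, h : S → {+1,−1}, and α ≥ 0. Let a read-once noisy decision tree on k variables be given by finite level sets C_0, C_1, …, C_k with C_0 a singleton, together with noisy query maps g_i : C_{i−1} × S → PMF(C_i) for i = 1,…,k. Let X_1, …, X_k be independent, each with distribution μ; the computation visits v_0 ∈ C_0 and then v_i is drawn from g_i(v_{i−1}, X_i), and outputs the leaf v_k ∈ C_k. Define f : S^k → {+1,−1} by f(x_1,…,x_k) = h(x_1)·h(x_2)⋯h(x_k). If for every i ∈ {1,…,k} and every v ∈ C_{i−1} the noisy function g_i(v,·) satisfies adv_{h,μ}(g_i(v,·)) ≤ α, then adv_{f,μ^k}(T) ≤ α^k, where T denotes the (randomized) map (x_1,…,x_k) ↦ v_k. -/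
/-- The advantage of a randomized map (Markov kernel) `A : S → PMF C` for
`f : S → {+1,-1}` under the distribution `μ` on the finite set `S`:
`adv_{f,μ}(A) = max_{a : C → [-1,1]} |E[f(X) a(A(X))]|`, where `X ∼ μ` and the
expectation is also over the internal randomness of `A`. -/
noncomputable def advPMF {S C : Type*} [Fintype S] [Fintype C]
    (μ : S → ℝ) (f : S → ℝ) (A : S → PMF C) : ℝ :=
  sSup {r : ℝ | ∃ a : C → ℝ, (∀ c, a c ∈ Set.Icc (-1 : ℝ) 1) ∧
    r = |∑ s, μ s * (f s * ∑ c, ((A s) c).toReal * a c)|}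

/-- The computation of a read-once noisy decision tree: starting from the root
`v0 : C 0`, the vertex `v (i+1)` at level `i+1` is drawn from the noisy query
`g i (v i) (y i)` applied to the `i`-th queried input `y i`.  The value at
level `i` is the distribution of the vertex reached at level `i`. -/
noncomputable def runNoisyTree {S : Type*} {C : ℕ → Type*}
    (g : (i : ℕ) → C i → S → PMF (C (i + 1))) (v0 : C 0) (y : ℕ → S) :
    (i : ℕ) → PMF (C i)
  | 0 => PMF.pure v0
  | i + 1 => (runNoisyTree g v0 y i).bind fun v => g i v (y i)

lemma pmf_sum_toReal {C : Type*} [Fintype C] (p : PMF C) : ∑ c, (p c).toReal = 1 := by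
  have h1 : ∑ c, p c = 1 := by rw [← tsum_fintype (L := .unconditional _)]; exact p.tsum_coe
  have h2 := congrArg ENNReal.toReal h1
  rwa [ENNReal.toReal_sum (fun c _ => p.apply_ne_top c), ENNReal.toReal_one] at h2

lemma runNoisyTree_congr {S : Type*} {C : ℕ → Type*}
    (g : (i : ℕ) → C i → S → PMF (C (i + 1))) (v0 : C 0) (y y' : ℕ → S)
    (i : ℕ) (hy : ∀ j < i, y j = y' j) :
    runNoisyTree g v0 y i = runNoisyTree g v0 y' i := by
  induction i with
  | zero => rfl
  | succ n ih =>
    simp only [runNoisyTree, ih (fun j hj => hy j (hj.trans (Nat.lt_succ_self n))),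
      hy n (Nat.lt_succ_self n)]

lemma inner_abs_le {S C : Type*} [Fintype S] [Fintype C]
    (μ f : S → ℝ) (A : S → PMF C) (a : C → ℝ) (M : ℝ) (hM : 0 ≤ M)
    (ha : ∀ c, |a c| ≤ M) :
    |∑ s, μ s * (f s * ∑ c, ((A s) c).toReal * a c)| ≤ (∑ s, |μ s| * |f s|) * M := by
  have ht : ∀ s, |∑ c, ((A s) c).toReal * a c| ≤ M := by
    intro s
    calc |∑ c, ((A s) c).toReal * a c| ≤ ∑ c, |((A s) c).toReal * a c| :=
          Finset.abs_sum_le_sum_abs _ _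
      _ ≤ ∑ c, ((A s) c).toReal * M := by
          apply Finset.sum_le_sum
          intro c _
          rw [abs_mul, abs_of_nonneg ENNReal.toReal_nonneg]
          exact mul_le_mul_of_nonneg_left (ha c) ENNReal.toReal_nonneg
      _ = M := by rw [← Finset.sum_mul, pmf_sum_toReal, one_mul]
  calc |∑ s, μ s * (f s * ∑ c, ((A s) c).toReal * a c)|
      ≤ ∑ s, |μ s * (f s * ∑ c, ((A s) c).toReal * a c)| := Finset.abs_sum_le_sum_abs _ _
    _ ≤ ∑ s, |μ s| * |f s| * M := by
        apply Finset.sum_le_sum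
        intro s _
        rw [abs_mul, abs_mul, mul_assoc]
        exact mul_le_mul_of_nonneg_left
          (mul_le_mul_of_nonneg_left (ht s) (abs_nonneg _)) (abs_nonneg _)
    _ = (∑ s, |μ s| * |f s|) * M := (Finset.sum_mul _ _ _).symm

lemma advPMF_bddAbove {S C : Type*} [Fintype S] [Fintype C]
    (μ f : S → ℝ) (A : S → PMF C) :
    BddAbove {r : ℝ | ∃ a : C → ℝ, (∀ c, a c ∈ Set.Icc (-1 : ℝ) 1) ∧
      r = |∑ s, μ s * (f s * ∑ c, ((A s) c).toReal * a c)|} := by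
  refine ⟨(∑ s, |μ s| * |f s|) * 1, ?_⟩
  rintro r ⟨a, ha, rfl⟩
  exact inner_abs_le μ f A a 1 zero_le_one
    (fun c => abs_le.mpr ⟨(ha c).1, (ha c).2⟩)

lemma abs_le_advPMF {S C : Type*} [Fintype S] [Fintype C]
    (μ f : S → ℝ) (A : S → PMF C) (a : C → ℝ) (ha : ∀ c, |a c| ≤ 1) :
    |∑ s, μ s * (f s * ∑ c, ((A s) c).toReal * a c)| ≤ advPMF μ f A :=
  le_csSup (advPMF_bddAbove μ f A)
    ⟨a, fun c => Set.mem_Icc.mpr (abs_le.mp (ha c)), rfl⟩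

lemma abs_le_scaled {S C : Type*} [Fintype S] [Fintype C]
    (μ f : S → ℝ) (A : S → PMF C) (a : C → ℝ) (α M : ℝ)
    (hA : advPMF μ f A ≤ α) (hM : 0 ≤ M) (ha : ∀ c, |a c| ≤ M) :
    |∑ s, μ s * (f s * ∑ c, ((A s) c).toReal * a c)| ≤ α * M := by
  rcases eq_or_lt_of_le hM with hM0 | hMpos
  · have h0 : ∀ c, a c = 0 := fun c => abs_eq_zero.mp
      (le_antisymm (hM0 ▸ ha c) (abs_nonneg _))
    simp [h0, ← hM0]
  · have key := abs_le_advPMF μ f A (fun c => a c / M)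
      (fun c => by rw [abs_div, abs_of_pos hMpos]; exact (div_le_one hMpos).mpr (ha c))
    have heq : ∑ s, μ s * (f s * ∑ c, ((A s) c).toReal * a c)
        = M * ∑ s, μ s * (f s * ∑ c, ((A s) c).toReal * (a c / M)) := by
      rw [Finset.mul_sum]
      refine Finset.sum_congr rfl fun s _ => ?_
      have hT : ∑ c, ((A s) c).toReal * a c
          = M * ∑ c, ((A s) c).toReal * (a c / M) := by
        rw [Finset.mul_sum]
        refine Finset.sum_congr rfl fun c _ => ?_
        field_simp
      rw [hT]; ring
    rw [heq, abs_mul, abs_of_pos hMpos, mul_comm α M]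
    exact mul_le_mul_of_nonneg_left (le_trans key hA) hM

lemma bind_sum_toReal {B D : Type*} [Fintype B] [Fintype D]
    (p : PMF B) (q : B → PMF D) (a : D → ℝ) :
    ∑ c, ((p.bind q) c).toReal * a c
      = ∑ v, (p v).toReal * ∑ c, ((q v) c).toReal * a c := by
  have hb : ∀ c, ((p.bind q) c).toReal = ∑ v, (p v).toReal * ((q v) c).toReal := by
    intro c
    rw [PMF.bind_apply, tsum_fintype, ENNReal.toReal_sum
      (fun v _ => ENNReal.mul_ne_top (p.apply_ne_top v) ((q v).apply_ne_top c))]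
    exact Finset.sum_congr rfl fun v _ => ENNReal.toReal_mul
  simp only [hb, Finset.sum_mul]
  rw [Finset.sum_comm]
  refine Finset.sum_congr rfl fun v _ => ?_
  rw [Finset.mul_sum]
  exact Finset.sum_congr rfl fun c _ => mul_assoc _ _ _

lemma tree_aux {S : Type*} [Fintype S] [Nonempty S]
    (μ : S → ℝ) (h : S → ℝ) (α : ℝ) (hα : 0 ≤ α)
    (C : ℕ → Type) [inst : ∀ i, Fintype (C i)]
    (v0 : C 0) (g : (i : ℕ) → C i → S → PMF (C (i + 1))) :
    ∀ (k : ℕ) (a : C k → ℝ) (M : ℝ), 0 ≤ M → (∀ c, |a c| ≤ M) →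
    (∀ i, i < k → ∀ v : C i, advPMF μ h (g i v) ≤ α) →
    |∑ x : Fin k → S, (∏ i, μ (x i)) * ((∏ i, h (x i)) *
      ∑ c, ((runNoisyTree g v0
        (fun i => if hi : i < k then x ⟨i, hi⟩ else Classical.arbitrary S) k) c).toReal
          * a c)| ≤ α ^ k * M := by
  intro k
  induction k with
  | zero =>
    intro a M hM ha _
    have hone : ∀ x : Fin 0 → S,
        (∏ i, μ (x i)) * ((∏ i, h (x i)) *
          ∑ c, ((runNoisyTree g v0
            (fun i => if hi : i < 0 then x ⟨i, hi⟩ else Classical.arbitrary S) 0) c).toReal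
              * a c) = a v0 := by
      intro x
      have h1 : (∑ c : C 0, ((PMF.pure v0 : PMF (C 0)) c).toReal * a c) = a v0 := by
        simp only [PMF.pure_apply, apply_ite ENNReal.toReal, ENNReal.toReal_one,
          ENNReal.toReal_zero, ite_mul, one_mul, zero_mul]
        rw [Finset.sum_eq_single v0 (fun b _ hb => if_neg hb)
          (fun hv => absurd (Finset.mem_univ v0) hv), if_pos rfl]
      show (∏ i, μ (x i)) * ((∏ i, h (x i)) *
        ∑ c, ((PMF.pure v0 : PMF (C 0)) c).toReal * a c) = a v0
      rw [h1]
      simp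
    rw [Finset.sum_congr rfl fun x _ => hone x, Finset.sum_const]
    simp only [Finset.card_univ, pow_zero, one_mul]
    have hcard : Fintype.card (Fin 0 → S) = 1 := by simp
    rw [hcard, one_smul]
    exact ha v0
  | succ k ih =>
    intro a M hM ha hg
    have ha' : ∀ v : C k,
        |∑ s, μ s * (h s * ∑ c, ((g k v s) c).toReal * a c)| ≤ α * M :=
      fun v => abs_le_scaled μ h (g k v) a α M (hg k (Nat.lt_succ_self k) v) hM ha
    have hsum : ∑ x : Fin (k+1) → S, (∏ i, μ (x i)) * ((∏ i, h (x i)) *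
          ∑ c, ((runNoisyTree g v0
            (fun i => if hi : i < k + 1 then x ⟨i, hi⟩ else Classical.arbitrary S)
            (k+1)) c).toReal * a c)
        = ∑ x : Fin k → S, (∏ i, μ (x i)) * ((∏ i, h (x i)) *
          ∑ c, ((runNoisyTree g v0
            (fun i => if hi : i < k then x ⟨i, hi⟩ else Classical.arbitrary S) k)
              c).toReal
            * (fun v => ∑ s, μ s * (h s * ∑ c, ((g k v s) c).toReal * a c)) c) := by
      rw [← Equiv.sum_comp (Fin.snocEquiv (fun _ => S)), Fintype.sum_prod_type,
        Finset.sum_comm]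
      refine Finset.sum_congr rfl fun x' _ => ?_
      have hF : ∀ s : S,
          (∏ i, μ (Fin.snocEquiv (fun _ => S) (s, x') i)) *
            ((∏ i, h (Fin.snocEquiv (fun _ => S) (s, x') i)) *
            ∑ c, ((runNoisyTree g v0
              (fun i => if hi : i < k + 1 then Fin.snocEquiv (fun _ => S) (s, x') ⟨i, hi⟩
                else Classical.arbitrary S) (k+1)) c).toReal * a c)
          = ((∏ i, μ (x' i)) * μ s) * (((∏ i, h (x' i)) * h s) *
            ∑ v, ((runNoisyTree g v0
              (fun i => if hi : i < k then x' ⟨i, hi⟩ else Classical.arbitrary S) k)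
                v).toReal
              * ∑ c, ((g k v s) c).toReal * a c) := by
        intro s
        have hx : ∀ i : Fin (k+1), Fin.snocEquiv (fun _ => S) (s, x') i
            = (Fin.snoc x' s : Fin (k+1) → S) i := fun i => rfl
        have hμprod : (∏ i, μ (Fin.snocEquiv (fun _ => S) (s, x') i))
            = (∏ i, μ (x' i)) * μ s := by
          simp only [hx]
          rw [Fin.prod_univ_castSucc]
          simp [Fin.snoc_castSucc, Fin.snoc_last]
        have hhprod : (∏ i, h (Fin.snocEquiv (fun _ => S) (s, x') i))
            = (∏ i, h (x' i)) * h s := by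
          simp only [hx]
          rw [Fin.prod_univ_castSucc]
          simp [Fin.snoc_castSucc, Fin.snoc_last]
        have hrun : runNoisyTree g v0
              (fun i => if hi : i < k + 1 then Fin.snocEquiv (fun _ => S) (s, x') ⟨i, hi⟩
                else Classical.arbitrary S) (k+1)
            = (runNoisyTree g v0
              (fun i => if hi : i < k then x' ⟨i, hi⟩ else Classical.arbitrary S) k).bind
              (fun v => g k v s) := by
          have hlow : runNoisyTree g v0
                (fun i => if hi : i < k + 1 then Fin.snocEquiv (fun _ => S) (s, x') ⟨i, hi⟩
                  else Classical.arbitrary S) k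
              = runNoisyTree g v0
                (fun i => if hi : i < k then x' ⟨i, hi⟩ else Classical.arbitrary S) k := by
            apply runNoisyTree_congr
            intro j hj
            rw [dif_pos (hj.trans (Nat.lt_succ_self k)), dif_pos hj]
            show (Fin.snoc x' s : Fin (k+1) → S) ⟨j, hj.trans (Nat.lt_succ_self k)⟩ = x' ⟨j, hj⟩
            have : (⟨j, hj.trans (Nat.lt_succ_self k)⟩ : Fin (k+1))
                = Fin.castSucc ⟨j, hj⟩ := rfl
            rw [this, Fin.snoc_castSucc]
          have hyk : (if hi : k < k + 1 then Fin.snocEquiv (fun _ => S) (s, x') ⟨k, hi⟩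
              else Classical.arbitrary S) = s := by
            rw [dif_pos (Nat.lt_succ_self k)]
            show (Fin.snoc x' s : Fin (k+1) → S) (Fin.last k) = s
            exact Fin.snoc_last _ _
          show (runNoisyTree g v0 _ k).bind _ = _
          rw [hlow]
          exact congrArg _ (funext fun v => congrArg (g k v) hyk)
        rw [hμprod, hhprod, hrun, bind_sum_toReal]
      rw [Finset.sum_congr rfl fun s _ => hF s]
      simp only [Finset.mul_sum]
      rw [Finset.sum_comm]
      exact Finset.sum_congr rfl fun v _ => Finset.sum_congr rfl fun s _ =>
        Finset.sum_congr rfl fun c _ => by ring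
    rw [hsum]
    calc |∑ x : Fin k → S, (∏ i, μ (x i)) * ((∏ i, h (x i)) *
          ∑ c, ((runNoisyTree g v0
            (fun i => if hi : i < k then x ⟨i, hi⟩ else Classical.arbitrary S) k)
              c).toReal
            * (fun v => ∑ s, μ s * (h s * ∑ c, ((g k v s) c).toReal * a c)) c)|
        ≤ α ^ k * (α * M) :=
          ih _ (α * M) (mul_nonneg hα hM) (fun v => ha' v)
            (fun i hi v => hg i (Nat.lt_succ_of_lt hi) v)
      _ = α ^ (k + 1) * M := by ring

/-- **Lemma `lem:read-once-tree-advantage` (advantage of read-once noisy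
decision trees).**
Let `S` be a finite set, `μ` a probability distribution on `S`,
`h : S → {+1,-1}` and `α ≥ 0`.  Let a read-once noisy decision tree on `k`
variables be given by finite level sets `C 0, …, C k` with `C 0` a singleton
(with unique element `v0`) and noisy query maps `g i : C i → S → PMF (C (i+1))`.
On independent inputs `X 1, …, X k ∼ μ` the tree starts at `v0` and draws
`v (i+1) ∼ g i (v i) (X i)`, outputting the leaf `v k`.  Let
`f(x₁,…,x_k) = h(x₁)⋯h(x_k)`.  If every noisy query `g i v` has advantage at
most `α` for `h` under `μ`, then the tree, viewed as a randomized map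
`T : S^k → PMF (C k)`, has advantage at most `α ^ k` for `f` under `μ^k`. -/
theorem readOnce_noisy_tree_advantage
    {S : Type*} [Fintype S] [Nonempty S] {k : ℕ}
    (μ : S → ℝ) (hμ0 : ∀ s, 0 ≤ μ s) (hμ1 : ∑ s, μ s = 1)
    (h : S → ℝ) (hh : ∀ s, h s = 1 ∨ h s = -1)
    (α : ℝ) (hα : 0 ≤ α)
    (C : ℕ → Type) [∀ i, Fintype (C i)]
    (v0 : C 0) (hv0 : ∀ w : C 0, w = v0)
    (g : (i : ℕ) → C i → S → PMF (C (i + 1)))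
    (hg : ∀ i, i < k → ∀ v : C i, advPMF μ h (g i v) ≤ α) :
    advPMF (fun x : Fin k → S => ∏ i, μ (x i)) (fun x => ∏ i, h (x i))
      (fun x => runNoisyTree g v0
        (fun i => if hi : i < k then x ⟨i, hi⟩ else Classical.arbitrary S) k)
      ≤ α ^ k := by
  refine Real.sSup_le ?_ (pow_nonneg hα k)
  rintro r ⟨a, ha, rfl⟩
  have key := tree_aux μ h α hα C v0 g k a 1 zero_le_one
    (fun c => abs_le.mpr ⟨(ha c).1, (ha c).2⟩) hg
  simpa using key
end

section
/- Let t be a positive integer, ε ∈ (0, 1/2), and γ = ε^t. There exists a randomized algorithm, i.e., a Markov kernel K : {0,1} → PMF({0,1}^t), with the following property: for each b ∈ {0,1}, if the input to K is a γ-noisy copy of b (equal to b with probability 1−γ and to 1−b with probability γ), then the output distribution (1−γ)·K(b) + γ·K(1−b) equals the product distribution on {0,1}^t in which each of the t coordinates independently equals b with probability 1−ε and equals 1−b with probability ε. -/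
/-- **Lemma 36 of Goyal–Kindler–Saks (noise regeneration).**
Let `t ≥ 1`, `ε ∈ (0, 1/2)` and `γ = ε^t`.  There is a randomized algorithm,
i.e. a Markov kernel `K : {0,1} → PMF({0,1}^t)`, such that for each bit `b`:
if the input to `K` is a `γ`-noisy copy of `b` (equal to `b` with probability
`1-γ` and to `¬b` with probability `γ`), then the output distribution
`(1-γ)·K(b) + γ·K(¬b)` is the product distribution on `{0,1}^t` in which each
of the `t` coordinates independently equals `b` with probability `1-ε` and
equals `¬b` with probability `ε`. -/
theorem noise_regeneration (t : ℕ) (ht : 0 < t) (ε : ℝ)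
    (hε : ε ∈ Set.Ioo (0 : ℝ) (1 / 2)) :
    ∃ K : Bool → PMF (Fin t → Bool), ∀ b : Bool, ∀ y : Fin t → Bool,
      (1 - ε ^ t) * ((K b) y).toReal + ε ^ t * ((K (!b)) y).toReal
        = ∏ i : Fin t, if y i = b then 1 - ε else ε := by
  obtain ⟨hε0, hε2⟩ := hε
  set γ : ℝ := ε ^ t with hγ
  have hεlt1 : ε < 1 := by linarith
  have htne : t ≠ 0 := ht.ne'
  have hγ0 : 0 < γ := pow_pos hε0 t
  have hγε : γ ≤ ε := pow_le_of_le_one hε0.le hεlt1.le htne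
  have h2γ : 0 < 1 - 2 * γ := by linarith
  set μ : Bool → (Fin t → Bool) → ℝ :=
    fun b y => ∏ i, if y i = b then 1 - ε else ε with hμdef
  have hfac_lb : ∀ (b : Bool) (y : Fin t → Bool) (i : Fin t),
      ε ≤ (if y i = b then 1 - ε else ε) := by
    intro b y i; split <;> linarith
  have hfac_ub : ∀ (b : Bool) (y : Fin t → Bool) (i : Fin t),
      (if y i = b then 1 - ε else ε) ≤ 1 - ε := by
    intro b y i; split <;> linarith
  have hμ_lb : ∀ b y, γ ≤ μ b y := by
    intro b y
    have := Finset.prod_le_prod (s := Finset.univ)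
      (f := fun _ : Fin t => ε) (g := fun i => if y i = b then 1 - ε else ε)
      (fun i _ => hε0.le) (fun i _ => hfac_lb b y i)
    simpa [hγ, Finset.prod_const] using this
  have hμ_ub : ∀ b y, μ b y ≤ (1 - ε) ^ t := by
    intro b y
    have := Finset.prod_le_prod (s := Finset.univ)
      (f := fun i => if y i = b then 1 - ε else ε) (g := fun _ : Fin t => 1 - ε)
      (fun i _ => le_trans hε0.le (hfac_lb b y i)) (fun i _ => hfac_ub b y i)
    simpa [Finset.prod_const] using this
  have hkey : (1 - ε) ^ t ≤ 1 - γ := by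
    have h2 : (1 - ε) ^ t ≤ 1 - ε :=
      pow_le_of_le_one (by linarith) (by linarith) htne
    linarith
  have hμpos : ∀ b y, 0 < μ b y := fun b y => lt_of_lt_of_le hγ0 (hμ_lb b y)
  -- nonnegativity of the kernel density
  have hnn : ∀ b y, 0 ≤ (1 - γ) * μ b y - γ * μ (!b) y := by
    intro b y
    have h1 : γ * μ (!b) y ≤ γ * (1 - γ) :=
      mul_le_mul_of_nonneg_left (le_trans (hμ_ub (!b) y) hkey) hγ0.le
    have h2 : (1 - γ) * γ ≤ (1 - γ) * μ b y :=
      mul_le_mul_of_nonneg_left (hμ_lb b y) (by linarith)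
    linarith [h1, h2]
  -- sum of μ b over all y is 1
  have hsum : ∀ b, ∑ y : Fin t → Bool, μ b y = 1 := by
    intro b
    have h := Finset.prod_univ_sum (fun _ : Fin t => (Finset.univ : Finset Bool))
      (fun _ c => if c = b then 1 - ε else ε)
    have hone : ∀ i : Fin t, (∑ c : Bool, if c = b then 1 - ε else ε) = 1 := by
      intro i; cases b <;> simp [Fintype.sum_bool]
    rw [Fintype.piFinset_univ] at h
    calc ∑ y : Fin t → Bool, μ b y
        = ∏ _i : Fin t, (∑ c : Bool, if c = b then 1 - ε else ε) := by
          rw [h]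
      _ = 1 := by
          rw [Finset.prod_congr rfl fun i _ => hone i]; simp
  set g : Bool → (Fin t → Bool) → ℝ :=
    fun b y => ((1 - γ) * μ b y - γ * μ (!b) y) / (1 - 2 * γ) with hgdef
  have hgnn : ∀ b y, 0 ≤ g b y := fun b y => div_nonneg (hnn b y) h2γ.le
  have hgsum : ∀ b, ∑ y : Fin t → Bool, g b y = 1 := by
    intro b
    have : ∑ y : Fin t → Bool, g b y
        = ((1 - γ) * ∑ y : Fin t → Bool, μ b y
            - γ * ∑ y : Fin t → Bool, μ (!b) y) / (1 - 2 * γ) := by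
      rw [Finset.mul_sum, Finset.mul_sum, ← Finset.sum_sub_distrib, ← Finset.sum_div]
    rw [this, hsum b, hsum (!b)]
    have h2γ' : 1 - 2 * γ ≠ 0 := h2γ.ne'
    rw [div_eq_one_iff_eq h2γ']
    ring
  refine ⟨fun b => PMF.ofFintype (fun y => ENNReal.ofReal (g b y)) ?_, ?_⟩
  · rw [← ENNReal.ofReal_sum_of_nonneg (fun y _ => hgnn b y), hgsum b,
      ENNReal.ofReal_one]
  · intro b y
    have happ : ∀ b, ((PMF.ofFintype (fun y => ENNReal.ofReal (g b y))
        (by rw [← ENNReal.ofReal_sum_of_nonneg (fun y _ => hgnn b y), hgsum b,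
          ENNReal.ofReal_one])) y).toReal = g b y := by
      intro b
      rw [PMF.ofFintype_apply, ENNReal.toReal_ofReal (hgnn b y)]
    rw [happ b, happ (!b)]
    have hbb : (!!b) = b := Bool.not_not b
    have : (1 - γ) * g b y + γ * g (!b) y = μ b y := by
      rw [hgdef]
      simp only [hbb]
      have h2γ' : 1 - 2 * γ ≠ 0 := h2γ.ne'
      rw [mul_div_assoc', mul_div_assoc', ← add_div, div_eq_iff h2γ']
      ring
    rw [this]
end
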